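/- Every T1 connected first-countable topological space Z is a continuous open image of a connected metrizable space: there exist a connected metrizable topological space M and a surjective map g : M → Z that is continuous and open. -/

import Mathlib

open Set Topology TopologicalSpace

universe u

namespace Statement10Aux

attribute [local instance] Classical.propDecidable

variable {Z : Type u} [TopologicalSpace Z]

/-- Index type for hedgehog spines: open subsets of `Z`, with the discrete topology. -/
structure BO (Z : Type u) [TopologicalSpace Z] : Type u where
  set : Set Z
  isOpen : IsOpen set

instance : TopologicalSpace (BO Z) := ⊥
instance : DiscreteTopology (BO Z) := ⟨rfl⟩

/-- The point at parameter `t` on the spine indexed by `b`, inside the function space. -/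
noncomputable def phi (b : BO Z) (t : ℝ) : BoundedContinuousFunction (BO Z) ℝ :=
  ⟨⟨fun b' => if b' = b then t else 0, continuous_of_discreteTopology⟩,
    ⟨2 * |t|, by
      intro x y
      dsimp
      split_ifs <;> simp [Real.dist_eq, abs_le] <;>
        cases abs_cases t <;> constructor <;> linarith⟩⟩

@[simp] lemma phi_apply (b b' : BO Z) (t : ℝ) : phi b t b' = if b' = b then t else 0 := rfl

lemma phi_zero (b b' : BO Z) : phi b 0 = phi b' 0 := by
  ext x; simp

lemma eq_of_phi_eq {b b' : BO Z} {t s : ℝ} (h : phi b t = phi b' s) (hs : 0 < s) :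
    b' = b ∧ t = s := by
  have h1 := congrArg (fun f : BoundedContinuousFunction (BO Z) ℝ => f b') h
  simp only [phi_apply, if_pos rfl] at h1
  by_cases hb : b' = b
  · subst hb; simp at h1; exact ⟨rfl, h1⟩
  · rw [if_neg hb] at h1; exact absurd h1.symm (ne_of_gt hs)

lemma lipschitz_phi (b : BO Z) : LipschitzWith 1 (phi b (Z := Z)) := by
  apply LipschitzWith.of_dist_le_mul
  intro t s
  rw [NNReal.coe_one, one_mul, BoundedContinuousFunction.dist_le dist_nonneg]
  intro x
  simp only [phi_apply]
  split_ifs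
  · exact le_rfl
  · simp [Real.dist_eq]


/-- The set of legitimate coordinate values: points on some spine. -/
def Hset (Z : Type u) [TopologicalSpace Z] : Set (BoundedContinuousFunction (BO Z) ℝ) :=
  {f | ∃ b t, 0 ≤ t ∧ t ≤ 1 ∧ f = phi b t}

/-- Every spine with positive parameter appearing in `x` is an open set containing `z`. -/
def MemAll (x : ℕ → BoundedContinuousFunction (BO Z) ℝ) (z : Z) : Prop :=
  ∀ (n : ℕ) (b : BO Z) (t : ℝ), 0 < t → x n = phi b t → z ∈ b.set

/-- Cofinally many coordinates are at the tip of a spine contained in any given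
neighborhood of `z`. -/
def TailBase (x : ℕ → BoundedContinuousFunction (BO Z) ℝ) (z : Z) : Prop :=
  ∀ m : ℕ, ∀ N ∈ 𝓝 z, ∃ n, m ≤ n ∧ ∃ b : BO Z, x n = phi b 1 ∧ b.set ⊆ N

def Cond (x : ℕ → BoundedContinuousFunction (BO Z) ℝ) : Prop :=
  (∀ n, x n ∈ Hset Z) ∧ ∃ z, MemAll x z ∧ TailBase x z

/-- The connected metrizable space: a subset of a countable product. -/
def MSet (Z : Type u) [TopologicalSpace Z] : Set (ℕ → BoundedContinuousFunction (BO Z) ℝ) :=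
  {x | Cond x}

lemma point_unique [T1Space Z] {x : ℕ → BoundedContinuousFunction (BO Z) ℝ} {z z' : Z}
    (h1 : TailBase x z) (h2 : MemAll x z') : z = z' := by
  by_contra hne
  obtain ⟨n, -, b, hxn, hbN⟩ := h1 0 ({z'}ᶜ) (isOpen_compl_singleton.mem_nhds hne)
  exact hbN (h2 n b 1 one_pos hxn) rfl

noncomputable def g [T1Space Z] (x : MSet Z) : Z := x.2.2.choose

lemma g_spec [T1Space Z] (x : MSet Z) : MemAll x.1 (g x) ∧ TailBase x.1 (g x) :=
  x.2.2.choose_spec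

lemma g_eq [T1Space Z] (x : MSet Z) {z : Z} (h2 : MemAll x.1 z) (h1 : TailBase x.1 z) :
    g x = z :=
  point_unique (g_spec x).2 h2

/-- A countable family of open neighborhoods of `z` forming a neighborhood base. -/
lemma exists_base [FirstCountableTopology Z] (z : Z) :
    ∃ β : ℕ → BO Z, (∀ j, z ∈ (β j).set) ∧ ∀ N ∈ 𝓝 z, ∃ j, (β j).set ⊆ N := by
  obtain ⟨s, hs⟩ := (𝓝 z).exists_antitone_basis
  refine ⟨fun j => ⟨interior (s j), isOpen_interior⟩, fun j =>
    mem_interior_iff_mem_nhds.2 (hs.toHasBasis.mem_of_mem trivial), fun N hN => ?_⟩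
  obtain ⟨j, -, hj⟩ := hs.toHasBasis.mem_iff.1 hN
  exact ⟨j, interior_subset.trans hj⟩

/-- Installing tips of a base on all coordinates away from a finite set gives `TailBase`. -/
lemma tailBase_of_install {β : ℕ → BO Z} {z : Z}
    (hβ : ∀ N ∈ 𝓝 z, ∃ j, (β j).set ⊆ N) (I : Finset ℕ)
    {y : ℕ → BoundedContinuousFunction (BO Z) ℝ}
    (hy : ∀ n ∉ I, y n = phi (β (Nat.unpair n).1) 1) : TailBase y z := by
  intro m N hN
  obtain ⟨j, hj⟩ := hβ N hN
  set K := max m ((I.sup id) + 1) with hK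
  refine ⟨Nat.pair j K, le_trans (le_max_left _ _) (Nat.right_le_pair j K), β j, ?_, hj⟩
  have hnI : Nat.pair j K ∉ I := by
    intro hmem
    have h1 : Nat.pair j K ≤ I.sup id := Finset.le_sup (f := id) hmem
    have h2 : (I.sup id) + 1 ≤ Nat.pair j K :=
      le_trans (le_max_right m _) (Nat.right_le_pair j K)
    omega
  rw [hy _ hnI, Nat.unpair_pair]

lemma exists_g_eq [T1Space Z] [FirstCountableTopology Z] (z : Z) :
    ∃ x : MSet Z, g x = z := by
  obtain ⟨β, hβmem, hβ⟩ := exists_base z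
  set x : ℕ → BoundedContinuousFunction (BO Z) ℝ := fun n => phi (β (Nat.unpair n).1) 1 with hx
  have hmem : MemAll x z := by
    intro n b t ht h
    obtain ⟨hb, -⟩ :=
      eq_of_phi_eq (show phi (β (Nat.unpair n).1) 1 = phi b t from h) ht
    rw [hb]; exact hβmem _
  have htail : TailBase x z := tailBase_of_install hβ ∅ (fun n _ => rfl)
  have hx : x ∈ MSet Z :=
    ⟨fun n => ⟨β (Nat.unpair n).1, 1, zero_le_one, le_rfl, rfl⟩, z, hmem, htail⟩
  exact ⟨⟨x, hx⟩, g_eq _ hmem htail⟩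


lemma continuous_g [T1Space Z] : Continuous (g (Z := Z)) := by
  rw [continuous_iff_continuousAt]
  intro x
  intro U hU
  obtain ⟨n, -, b, hxn, hbU⟩ := (g_spec x).2 0 U hU
  have hcont : Continuous fun y : MSet Z => (y.1 n) :=
    (continuous_apply n).comp continuous_subtype_val
  have hball : {y : MSet Z | dist (y.1 n) (x.1 n) < 1} ∈ 𝓝 x := by
    have : IsOpen {y : MSet Z | dist (y.1 n) (x.1 n) < 1} :=
      isOpen_lt (continuous_dist.comp (hcont.prodMk continuous_const)) continuous_const
    exact this.mem_nhds (by simp)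
  rw [Filter.mem_map]
  refine Filter.mem_of_superset hball ?_
  intro y hy
  obtain ⟨b', t, ht0, ht1, hrep⟩ := y.2.1 n
  have hd : dist (y.1 n) (x.1 n) < 1 := hy
  rw [hrep, hxn] at hd
  have heval : dist (phi b' t b) (phi b 1 b) ≤ dist (phi b' t) (phi b 1) :=
    BoundedContinuousFunction.dist_coe_le_dist b
  have hb' : b = b' ∧ 0 < t := by
    by_contra hcon
    have hzero : phi b' t b = 0 := by
      simp only [phi_apply]
      by_cases hbb : b = b'
      · rw [if_pos hbb]
        rcases not_and_or.1 hcon with h | h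
        · exact absurd hbb h
        · linarith [not_lt.1 h]
      · rw [if_neg hbb]
    rw [hzero] at heval
    simp only [phi_apply, if_pos rfl] at heval
    rw [Real.dist_eq] at heval
    simp at heval
    linarith
  have : g y ∈ b.set := by
    apply (g_spec y).1 n b t hb'.2
    rw [hrep, hb'.1]
  exact hbU this

lemma isOpenMap_g [T1Space Z] [FirstCountableTopology Z] : IsOpenMap (g (Z := Z)) := by
  intro U hU
  rw [isOpen_iff_forall_mem_open]
  rintro p ⟨x, hxU, rfl⟩
  obtain ⟨V, hVopen, hVU⟩ := isOpen_induced_iff.1 hU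
  have hxV : x.1 ∈ V := by rw [← hVU] at hxU; exact hxU
  obtain ⟨I, u, hu, hpi⟩ := isOpen_pi_iff.1 hVopen x.1 hxV
  choose bf tf ht0 ht1 hrep using x.2.1
  refine ⟨⋂ n ∈ I, (if 0 < tf n then (bf n).set else univ), ?_, ?_, ?_⟩
  · -- W ⊆ g '' U
    intro w hw
    obtain ⟨β, hβmem, hβ⟩ := exists_base w
    let y : ℕ → BoundedContinuousFunction (BO Z) ℝ :=
      fun n => if n ∈ I then x.1 n else phi (β (Nat.unpair n).1) 1
    have hyI : ∀ n ∈ I, y n = x.1 n := fun n hn => if_pos hn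
    have hyO : ∀ n ∉ I, y n = phi (β (Nat.unpair n).1) 1 := fun n hn => if_neg hn
    have hwmem : ∀ n ∈ I, 0 < tf n → w ∈ (bf n).set := by
      intro n hn htf
      have := mem_iInter₂.1 hw n hn
      rwa [if_pos htf] at this
    have hshape : ∀ n, y n ∈ Hset Z := by
      intro n
      by_cases hn : n ∈ I
      · rw [hyI n hn]
        exact ⟨bf n, tf n, ht0 n, ht1 n, hrep n⟩
      · rw [hyO n hn]
        exact ⟨β (Nat.unpair n).1, 1, zero_le_one, le_rfl, rfl⟩
    have hmem : MemAll y w := by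
      intro n b t ht h
      by_cases hn : n ∈ I
      · rw [hyI n hn, hrep n] at h
        obtain ⟨hb, hts⟩ := eq_of_phi_eq h ht
        rw [hb]
        exact hwmem n hn (by rw [hts]; exact ht)
      · rw [hyO n hn] at h
        obtain ⟨hb, -⟩ := eq_of_phi_eq h ht
        rw [hb]; exact hβmem _
    have htail : TailBase y w := tailBase_of_install hβ I (fun n hn => hyO n hn)
    have hyM : y ∈ MSet Z := ⟨hshape, w, hmem, htail⟩
    refine ⟨⟨y, hyM⟩, ?_, g_eq _ hmem htail⟩
    rw [← hVU]
    apply hpi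
    intro n hn
    have hn' : n ∈ I := Finset.mem_coe.1 hn
    show y n ∈ u n
    rw [hyI n hn']
    exact (hu n hn').2
  · -- W open
    apply isOpen_biInter_finset
    intro n hn
    split_ifs
    · exact (bf n).isOpen
    · exact isOpen_univ
  · -- g x ∈ W
    apply mem_iInter₂.2
    intro n hn
    split_ifs with htf
    · exact (g_spec x).1 n (bf n) (tf n) htf (hrep n)
    · exact mem_univ _


/-- Coordinate values allowed in the fiber over `z`. -/
def Hz (z : Z) : Set (BoundedContinuousFunction (BO Z) ℝ) :=
  {f | ∃ b t, 0 ≤ t ∧ t ≤ 1 ∧ f = phi b t ∧ (0 < t → z ∈ b.set)}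

lemma Hz_preconnected (z : Z) : IsPreconnected (Hz z) := by
  apply isPreconnected_of_forall (phi (⟨univ, isOpen_univ⟩ : BO Z) 0)
  rintro f ⟨b, t, ht0, ht1, rfl, hbz⟩
  by_cases ht : 0 < t
  · refine ⟨phi b '' Icc 0 1, ?_, ?_, ?_, ?_⟩
    · rintro f' ⟨s, hs, rfl⟩
      exact ⟨b, s, hs.1, hs.2, rfl, fun _ => hbz ht⟩
    · exact ⟨0, ⟨le_rfl, zero_le_one⟩, (phi_zero _ _).symm⟩
    · exact ⟨t, ⟨ht0, ht1⟩, rfl⟩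
    · exact (isPreconnected_Icc).image _ (lipschitz_phi b).continuous.continuousOn
  · have ht' : t = 0 := le_antisymm (not_lt.1 ht) ht0
    subst ht'
    refine ⟨{phi (⟨univ, isOpen_univ⟩ : BO Z) 0}, ?_, rfl, ?_, isPreconnected_singleton⟩
    · rintro f' rfl
      exact ⟨⟨univ, isOpen_univ⟩, 0, le_rfl, zero_le_one, rfl, fun h => absurd h (by norm_num)⟩
    · exact (phi_zero _ _)

/-- The fiber of `g` over `z`, as a set of raw sequences. -/
def Fz (z : Z) : Set (ℕ → BoundedContinuousFunction (BO Z) ℝ) :=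
  {x | (∀ n, x n ∈ Hz z) ∧ TailBase x z}

lemma Fz_preconnected (z : Z) : IsPreconnected (Fz z) := by
  rcases (Fz z).eq_empty_or_nonempty with h | ⟨x0, hx0⟩
  · rw [h]; exact isPreconnected_empty
  -- cylinders that agree with x0 from coordinate k on
  set C : ℕ → Set (ℕ → BoundedContinuousFunction (BO Z) ℝ) := fun k =>
    Set.pi univ (fun n => if n < k then Hz z else {x0 n}) with hC
  have hCconn : ∀ k, IsPreconnected (C k) := by
    intro k
    apply isPreconnected_univ_pi
    intro n
    split_ifs
    · exact Hz_preconnected z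
    · exact isPreconnected_singleton
  have hCmem : ∀ k, ∀ w ∈ C k, (∀ n, w n ∈ Hz z) ∧ ∀ n, k ≤ n → w n = x0 n := by
    intro k w hw
    constructor
    · intro n
      have := hw n (mem_univ n)
      dsimp only at this
      by_cases hn : n < k
      · rwa [if_pos hn] at this
      · rw [if_neg hn] at this
        rw [this]
        exact hx0.1 n
    · intro n hn
      have := hw n (mem_univ n)
      dsimp only at this
      rwa [if_neg (by omega)] at this
  have hCsub : ∀ k, C k ⊆ Fz z := by
    intro k w hw
    obtain ⟨h1, h2⟩ := hCmem k w hw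
    refine ⟨h1, ?_⟩
    intro m N hN
    obtain ⟨n, hn, b, hb, hbN⟩ := hx0.2 (max m k) N hN
    exact ⟨n, le_trans (le_max_left _ _) hn, b,
      by rw [h2 n (le_trans (le_max_right _ _) hn)]; exact hb, hbN⟩
  have hx0C : ∀ k, x0 ∈ C k := by
    intro k n _
    dsimp only
    split_ifs
    · exact hx0.1 n
    · rfl
  set D : Set (ℕ → BoundedContinuousFunction (BO Z) ℝ) := ⋃ k, C k with hD
  have hDconn : IsPreconnected D := by
    apply isPreconnected_of_forall x0
    intro y hy
    obtain ⟨k, hk⟩ := mem_iUnion.1 hy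
    exact ⟨C k, subset_iUnion C k, hx0C k, hk, hCconn k⟩
  have hDsub : D ⊆ Fz z := iUnion_subset hCsub
  have hclos : Fz z ⊆ closure D := by
    intro w hw
    rw [mem_closure_iff]
    intro o ho hwo
    obtain ⟨I, u, hu, hpi⟩ := isOpen_pi_iff.1 ho w hwo
    classical
    set w' : ℕ → BoundedContinuousFunction (BO Z) ℝ :=
      fun n => if n ∈ I then w n else x0 n with hw'
    refine ⟨w', hpi ?_, ?_⟩
    · intro n hn
      have hn' : n ∈ I := Finset.mem_coe.1 hn
      show w' n ∈ u n
      rw [hw']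
      simp only [if_pos hn']
      exact (hu n hn').2
    · apply mem_iUnion.2
      refine ⟨(I.sup id) + 1, ?_⟩
      intro n _
      dsimp only
      split_ifs with hn
      · rw [hw']
        dsimp only
        split_ifs with hnI
        · exact hw.1 n
        · exact hx0.1 n
      · rw [hw']
        have hnI : n ∉ I := by
          intro hmem
          have : n ≤ I.sup id := Finset.le_sup (f := id) hmem
          omega
        simp only [if_neg hnI]
        rfl
  exact hDconn.subset_closure hDsub hclos

lemma fiber_eq [T1Space Z] (z : Z) :
    Subtype.val '' {y : MSet Z | g y = z} = Fz z := by
  ext x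
  constructor
  · rintro ⟨y, hy, rfl⟩
    have hspec := g_spec y
    rw [show g y = z from hy] at hspec
    constructor
    · intro n
      obtain ⟨b, t, ht0, ht1, hrep⟩ := y.2.1 n
      refine ⟨b, t, ht0, ht1, hrep, fun ht => hspec.1 n b t ht hrep⟩
    · exact hspec.2
  · intro hx
    have hmem : MemAll x z := by
      intro n b t ht h
      obtain ⟨b', t', ht0', ht1', hrep', hz'⟩ := hx.1 n
      rw [hrep'] at h
      obtain ⟨hb, hts⟩ := eq_of_phi_eq h ht
      rw [hb]
      exact hz' (by rw [hts]; exact ht)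
    have hxM : x ∈ MSet Z := by
      refine ⟨fun n => ?_, z, hmem, hx.2⟩
      obtain ⟨b, t, ht0, ht1, hrep, -⟩ := hx.1 n
      exact ⟨b, t, ht0, ht1, hrep⟩
    exact ⟨⟨x, hxM⟩, g_eq _ hmem hx.2, rfl⟩

lemma fiber_preconnected [T1Space Z] (z : Z) :
    IsPreconnected {y : MSet Z | g y = z} := by
  rw [← IsInducing.subtypeVal.isPreconnected_image, fiber_eq]
  exact Fz_preconnected z


lemma surjective_g [T1Space Z] [FirstCountableTopology Z] :
    Function.Surjective (g (Z := Z)) := fun z => exists_g_eq z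

lemma preconnected_MSet [T1Space Z] [FirstCountableTopology Z] [ConnectedSpace Z] :
    IsPreconnected (univ : Set (MSet Z)) := by
  rintro u v hu hv hcover ⟨xu, -, hxu⟩ ⟨xv, -, hxv⟩
  have hgu : IsOpen (g '' u) := isOpenMap_g u hu
  have hgv : IsOpen (g '' v) := isOpenMap_g v hv
  have hZ : IsPreconnected (univ : Set Z) := isPreconnected_univ
  have hcov : univ ⊆ g '' u ∪ g '' v := by
    intro z _
    obtain ⟨x, hx⟩ := surjective_g (Z := Z) z
    rcases hcover (mem_univ x) with h | h
    · exact Or.inl ⟨x, h, hx⟩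
    · exact Or.inr ⟨x, h, hx⟩
  obtain ⟨z, -, hz⟩ := hZ (g '' u) (g '' v) hgu hgv hcov
    ⟨g xu, mem_univ _, ⟨xu, hxu, rfl⟩⟩ ⟨g xv, mem_univ _, ⟨xv, hxv, rfl⟩⟩
  obtain ⟨⟨yu, hyu, hgyu⟩, ⟨yv, hyv, hgyv⟩⟩ := hz
  have hfib := fiber_preconnected (Z := Z) z
  obtain ⟨y, -, hy⟩ := hfib u v hu hv
    (fun y _ => hcover (mem_univ y)) ⟨yu, hgyu, hyu⟩ ⟨yv, hgyv, hyv⟩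
  exact ⟨y, mem_univ y, hy⟩

end Statement10Aux

set_option synthInstance.maxHeartbeats 1000000 in
set_option maxHeartbeats 1000000 in
theorem statement10 {Z : Type u} [TopologicalSpace Z] [T1Space Z] [ConnectedSpace Z]
    [FirstCountableTopology Z] :
    ∃ (M : Type u) (tM : TopologicalSpace M),
      @TopologicalSpace.MetrizableSpace M tM ∧ @ConnectedSpace M tM ∧
        ∃ g : M → Z, Function.Surjective g ∧
          @Continuous M Z tM _ g ∧ @IsOpenMap M Z tM _ g := by
  classical
  haveI : MetrizableSpace (ℕ → BoundedContinuousFunction (Statement10Aux.BO Z) ℝ) :=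
    inferInstance
  refine ⟨Statement10Aux.MSet Z, inferInstance, inferInstance, ?_, Statement10Aux.g,
    Statement10Aux.surjective_g, Statement10Aux.continuous_g, Statement10Aux.isOpenMap_g⟩
  have hne : Nonempty (Statement10Aux.MSet Z) := by
    obtain ⟨z⟩ := (inferInstance : Nonempty Z)
    exact ⟨(Statement10Aux.exists_g_eq z).choose⟩
  exact { toNonempty := hne
          isPreconnected_univ := Statement10Aux.preconnected_MSet }
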